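/- Let p be an odd prime, q = p^s and r = p^t with s,t ≥ 1, let k ∈ E(r), let l ≥ 1, let λ_1,…,λ_l ∈ F_q* and ε_1, ε_2 ∈ F_q*. Let x_n, y_n ∈ F_q[T] be the continuants of [λ_1T,…,λ_lT], i.e. x_0 = 1, x_1 = λ_1T, y_0 = 0, y_1 = 1, and K_n = λ_nT·K_{n−1} + K_{n−2} for 2 ≤ n ≤ l. Then the algebraic equation y_l X^{r+1} − x_l X^r + (ε_1 P_k y_{l−1} − ε_2 Q_k y_l) X − ε_1 P_k x_{l−1} + ε_2 Q_k x_l = 0 has exactly one root α in F(q) = F_q((T^{−1})) satisfying |α| ≥ |T|. -/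

import Mathlib

open Polynomial

noncomputable section

/-- The coefficients `b_i = (-1)^(k-1-i) C(k-1,i) (2i+1)⁻¹` of `Q_k`. -/
def bRat (k i : ℕ) : ℚ := (-1) ^ (k - 1 - i) * (Nat.choose (k - 1) i : ℚ) * (2 * (i : ℚ) + 1)⁻¹

/-- `k ∈ E(r)` for `r = p^t`: `k = m p^l + (p^l - 1)/2`, `1 ≤ m ≤ (p-1)/2`, `0 ≤ l ≤ t-1`. -/
def memE (p t k : ℕ) : Prop :=
  ∃ m l : ℕ, 1 ≤ m ∧ m ≤ (p - 1) / 2 ∧ l ≤ t - 1 ∧ k = m * p ^ l + (p ^ l - 1) / 2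

/-- Continuant numerators: `x_0 = 1`, `x_1 = a_1`, `x_n = a_n x_{n-1} + x_{n-2}`. -/
def cnum {K : Type*} [Field K] (a : ℕ → K) : ℕ → K
  | 0 => 1
  | 1 => a 1
  | n + 2 => a (n + 2) * cnum a (n + 1) + cnum a n

/-- Continuant denominators: `y_0 = 0`, `y_1 = 1`, `y_n = a_n y_{n-1} + y_{n-2}`. -/
def cden {K : Type*} [Field K] (a : ℕ → K) : ℕ → K
  | 0 => 0
  | 1 => 1
  | n + 2 => a (n + 2) * cden a (n + 1) + cden a n

/-- The element `T` of `F(q) = F_q((T⁻¹))`, realized as the Laurent series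
(in the variable `T⁻¹`) of order `-1`. -/
def Tvar (Fq : Type*) [Field Fq] : LaurentSeries Fq := HahnSeries.single (-1 : ℤ) 1

/-- `P_k(T) = (T² - 1)^k` as an element of `F(q)`. -/
def PkLS (Fq : Type*) [Field Fq] (k : ℕ) : LaurentSeries Fq := (Tvar Fq ^ 2 - 1) ^ k

/-- `Q_k(T) = Σ_{i<k} b̄_i T^(2i+1)` as an element of `F(q)`, the coefficients being
the reductions mod `p` of the rationals `b_i` (`Fq` has characteristic `p`). -/
def QkLS (Fq : Type*) [Field Fq] (k : ℕ) : LaurentSeries Fq :=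
  ∑ i ∈ Finset.range k, algebraMap Fq (LaurentSeries Fq) ((bRat k i : Fq)) * Tvar Fq ^ (2 * i + 1)

/-- The partial quotients `λ_n T` in `F(q)`. -/
def aLin (Fq : Type*) [Field Fq] (lam : ℕ → Fq) (n : ℕ) : LaurentSeries Fq :=
  algebraMap Fq (LaurentSeries Fq) (lam n) * Tvar Fq

/-- The algebraic equation
`y_l X^(r+1) - x_l X^r + (ε₁ P_k y_{l-1} - ε₂ Q_k y_l) X - ε₁ P_k x_{l-1} + ε₂ Q_k x_l = 0`
defining a continued fraction of type `(r, l, k)`, where `x_n, y_n` are the continuants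
of `[λ₁ T, …, λ_l T]`. -/
def CFtypeEqn (Fq : Type*) [Field Fq] (r k l : ℕ) (lam : ℕ → Fq) (e1 e2 : Fq)
    (α : LaurentSeries Fq) : Prop :=
  cden (aLin Fq lam) l * α ^ (r + 1) - cnum (aLin Fq lam) l * α ^ r +
      (algebraMap Fq (LaurentSeries Fq) e1 * PkLS Fq k * cden (aLin Fq lam) (l - 1) -
        algebraMap Fq (LaurentSeries Fq) e2 * QkLS Fq k * cden (aLin Fq lam) l) * α -
      algebraMap Fq (LaurentSeries Fq) e1 * PkLS Fq k * cnum (aLin Fq lam) (l - 1) +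
      algebraMap Fq (LaurentSeries Fq) e2 * QkLS Fq k * cnum (aLin Fq lam) l = 0

namespace P7
variable {K : Type*} [Field K]

variable {K : Type*} [Field K]

/-- `vge n x` means every coefficient below `n` vanishes, i.e. `order x ≥ n` or `x = 0`. -/
def vge (n : ℤ) (x : LaurentSeries K) : Prop := ∀ e : ℤ, e < n → x.coeff e = 0

lemma vge_zero (n : ℤ) : vge n (0 : LaurentSeries K) := fun _ _ => rfl

lemma vge_mono {m n : ℤ} (h : m ≤ n) {x : LaurentSeries K} (hx : vge n x) : vge m x :=
  fun e he => hx e (lt_of_lt_of_le he h)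

lemma vge_add {n : ℤ} {x y : LaurentSeries K} (hx : vge n x) (hy : vge n y) :
    vge n (x + y) := fun e he => by
  rw [HahnSeries.coeff_add, hx e he, hy e he, add_zero]

lemma vge_neg {n : ℤ} {x : LaurentSeries K} (hx : vge n x) : vge n (-x) := fun e he => by
  rw [HahnSeries.coeff_neg, hx e he, neg_zero]

lemma vge_sub {n : ℤ} {x y : LaurentSeries K} (hx : vge n x) (hy : vge n y) :
    vge n (x - y) := by
  rw [sub_eq_add_neg]; exact vge_add hx (vge_neg hy)

lemma vge_of_order_le {n : ℤ} {x : LaurentSeries K} (h : n ≤ x.order) : vge n x :=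
  fun e he => HahnSeries.coeff_eq_zero_of_lt_order (lt_of_lt_of_le he h)

lemma le_order_of_vge {n : ℤ} {x : LaurentSeries K} (hx : x ≠ 0) (h : vge n x) :
    n ≤ x.order := by
  by_contra hc
  exact HahnSeries.coeff_order_eq_zero.not.mpr hx (h _ (not_le.mp hc))

lemma vge_of_all {x : LaurentSeries K} (h : ∀ n : ℤ, vge n x) : x = 0 := by
  ext e
  exact h (e + 1) e (by omega)

lemma vge_mul {n m : ℤ} {x y : LaurentSeries K} (hx : vge n x) (hy : vge m y) :
    vge (n + m) (x * y) := by
  rcases eq_or_ne x 0 with rfl | hx0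
  · rw [zero_mul]; exact vge_zero _
  rcases eq_or_ne y 0 with rfl | hy0
  · rw [mul_zero]; exact vge_zero _
  apply vge_of_order_le
  rw [HahnSeries.order_mul hx0 hy0]
  exact add_le_add (le_order_of_vge hx0 hx) (le_order_of_vge hy0 hy)

/-- `vex n x` : `x` has exact order `n`. -/
def vex (n : ℤ) (x : LaurentSeries K) : Prop := x ≠ 0 ∧ x.order = n

lemma vex.ne {n : ℤ} {x : LaurentSeries K} (h : vex n x) : x ≠ 0 := h.1

lemma vex.vge {n : ℤ} {x : LaurentSeries K} (h : vex n x) : vge n x :=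
  vge_of_order_le (le_of_eq h.2.symm)

lemma vex_mul {n m : ℤ} {x y : LaurentSeries K} (hx : vex n x) (hy : vex m y) :
    vex (n + m) (x * y) :=
  ⟨mul_ne_zero hx.1 hy.1, by rw [HahnSeries.order_mul hx.1 hy.1, hx.2, hy.2]⟩

lemma vex_pow {n : ℤ} {x : LaurentSeries K} (hx : vex n x) (r : ℕ) :
    vex (r * n) (x ^ r) :=
  ⟨pow_ne_zero r hx.1, by rw [HahnSeries.order_pow, hx.2]; simp [zsmul_eq_mul]⟩

lemma vex_inv {n : ℤ} {x : LaurentSeries K} (hx : vex n x) : vex (-n) x⁻¹ := by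
  refine ⟨inv_ne_zero hx.1, ?_⟩
  have h := HahnSeries.order_mul hx.1 (inv_ne_zero hx.1)
  rw [mul_inv_cancel₀ hx.1] at h
  have h1 : (1 : LaurentSeries K).order = 0 := HahnSeries.order_one
  rw [h1, hx.2] at h
  omega

lemma vex_div {n m : ℤ} {x y : LaurentSeries K} (hx : vex n x) (hy : vex m y) :
    vex (n - m) (x / y) := by
  rw [div_eq_mul_inv, sub_eq_add_neg]
  exact vex_mul hx (vex_inv hy)

lemma vge_div {n m : ℤ} {x y : LaurentSeries K} (hx : vge n x) (hy : vex m y) :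
    vge (n - m) (x / y) := by
  rw [div_eq_mul_inv, sub_eq_add_neg]
  exact vge_mul hx (vex_inv hy).vge

/-- adding something strictly smaller keeps exact order. -/
lemma vex_add_vge {n m : ℤ} {x y : LaurentSeries K} (hx : vex n x) (hy : vge m y)
    (hnm : n < m) : vex n (x + y) := by
  have hc : (x + y).coeff n ≠ 0 := by
    rw [HahnSeries.coeff_add, hy n hnm, add_zero, ← hx.2]
    exact HahnSeries.coeff_order_eq_zero.not.mpr hx.1
  have hne : x + y ≠ 0 := HahnSeries.ne_zero_of_coeff_ne_zero hc
  refine ⟨hne, le_antisymm (HahnSeries.order_le_of_coeff_ne_zero hc) ?_⟩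
  exact le_order_of_vge hne (vge_add hx.vge (vge_mono hnm.le hy))

lemma vex_sub_vge {n m : ℤ} {x y : LaurentSeries K} (hx : vex n x) (hy : vge m y)
    (hnm : n < m) : vex n (x - y) := by
  rw [sub_eq_add_neg]; exact vex_add_vge hx (vge_neg hy) hnm

lemma vex_single {a : ℤ} {r : K} (h : r ≠ 0) : vex a (HahnSeries.single a r) :=
  ⟨HahnSeries.single_ne_zero h, HahnSeries.order_single h⟩

lemma vex_C {r : K} (h : r ≠ 0) : vex 0 (HahnSeries.C r : LaurentSeries K) := vex_single h

lemma vge_C (r : K) : vge 0 (HahnSeries.C r : LaurentSeries K) := by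
  rcases eq_or_ne r 0 with rfl | h
  · rw [HahnSeries.C_zero]; exact vge_zero _
  · exact (vex_C h).vge



lemma algebraMap_eq_C (r : K) :
    algebraMap K (LaurentSeries K) r = HahnSeries.C r := by
  rw [HahnSeries.algebraMap_apply', PowerSeries.algebraMap_apply, Algebra.algebraMap_self,
    RingHom.id_apply, HahnSeries.ofPowerSeries_C]

lemma vex_Tvar : vex (-1) (Tvar K) := vex_single one_ne_zero

lemma vex_one : vex 0 (1 : LaurentSeries K) := ⟨one_ne_zero, HahnSeries.order_one⟩

lemma vge_one : vge 0 (1 : LaurentSeries K) := vex_one.vge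

lemma vex_aLin {lam : ℕ → K} {n : ℕ} (h : lam n ≠ 0) : vex (-1) (aLin K lam n) := by
  have := vex_mul (vex_C (K := K) h) vex_Tvar
  rw [zero_add] at this
  rw [aLin, algebraMap_eq_C]
  exact this

lemma vex_PkLS (k : ℕ) : vex (-2 * (k : ℤ)) (PkLS K k) := by
  have h2 : vex (-2) (Tvar K ^ 2 - 1) := by
    have := vex_pow (vex_Tvar (K := K)) 2
    norm_num at this
    exact vex_sub_vge this vge_one (by norm_num)
  have := vex_pow h2 k
  have he : (k : ℤ) * (-2) = -2 * (k : ℤ) := by ring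
  rw [he] at this
  exact this

lemma vge_sum {n : ℤ} {ι : Type*} {s : Finset ι} {f : ι → LaurentSeries K}
    (h : ∀ i ∈ s, vge n (f i)) : vge n (∑ i ∈ s, f i) := by
  classical
  induction s using Finset.induction_on with
  | empty => simpa using vge_zero n
  | @insert a s' hni ih =>
    rw [Finset.sum_insert hni]
    exact vge_add (h a (Finset.mem_insert_self a s'))
      (ih fun i hi => h i (Finset.mem_insert_of_mem hi))

lemma vge_QkLS (k : ℕ) : vge (1 - 2 * (k : ℤ)) (QkLS K k) := by
  apply vge_sum
  intro i hi
  rw [Finset.mem_range] at hi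
  rw [algebraMap_eq_C]
  have h1 : vge 0 (HahnSeries.C ((bRat k i : ℚ) : K) : LaurentSeries K) := vge_C _
  have h2 : vge (-(2 * (i : ℤ) + 1)) (Tvar K ^ (2 * i + 1)) := by
    have := vex_pow (vex_Tvar (K := K)) (2 * i + 1)
    have he : ((2 * i + 1 : ℕ) : ℤ) * (-1) = -(2 * (i : ℤ) + 1) := by push_cast; ring
    rw [he] at this
    exact this.vge
  have := vge_mul h1 h2
  rw [zero_add] at this
  exact vge_mono (by omega) this

/-- Determinant identity for continuants. -/
lemma cont_det (a : ℕ → K) : ∀ n : ℕ,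
    cnum a (n + 1) * cden a n - cnum a n * cden a (n + 1) = (-1) ^ (n + 1)
  | 0 => by simp [cnum, cden]
  | n + 1 => by
    have ih := cont_det a n
    show (a (n + 2) * cnum a (n + 1) + cnum a n) * cden a (n + 1) -
        cnum a (n + 1) * (a (n + 2) * cden a (n + 1) + cden a n) = (-1) ^ (n + 2)
    have : (-1 : K) ^ (n + 2) = (-1) * (-1) ^ (n + 1) := by ring
    rw [this, ← ih]; ring

lemma vex_cnum {lam : ℕ → K} {N : ℕ} (hlam : ∀ i, 1 ≤ i → i ≤ N → lam i ≠ 0) :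
    ∀ n, n ≤ N → vex (-(n : ℤ)) (cnum (aLin K lam) n) := by
  have key : ∀ n : ℕ, (n ≤ N → vex (-(n : ℤ)) (cnum (aLin K lam) n)) ∧
      (n + 1 ≤ N → vex (-((n : ℤ) + 1)) (cnum (aLin K lam) (n + 1))) := by
    intro n
    induction n with
    | zero =>
      constructor
      · intro _; exact vex_one
      · intro h1
        show vex _ (aLin K lam 1)
        exact vex_aLin (hlam 1 le_rfl h1)
    | succ n ih =>
      refine ⟨ih.2, fun h2 => ?_⟩
      show vex _ (aLin K lam (n + 2) * cnum (aLin K lam) (n + 1) + cnum (aLin K lam) n)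
      have ha : vex (-1) (aLin K lam (n + 2)) := vex_aLin (hlam (n + 2) (by omega) (by omega))
      have h1 := ih.2 (by omega)
      have h0 := (ih.1 (by omega)).vge
      have hm := vex_mul ha h1
      have he : (-1 : ℤ) + (-((n : ℤ) + 1)) = -((n : ℤ) + 1 + 1) := by ring
      rw [he] at hm
      have hres := vex_add_vge hm h0 (by push_cast; omega)
      have hcast : (-(((n + 1 : ℕ) : ℤ) + 1)) = -((n : ℤ) + 1 + 1) := by push_cast; ring
      rw [hcast]
      exact hres
  exact fun n hn => (key n).1 hn

lemma cden_zero' (a : ℕ → K) : cden a 0 = 0 := rfl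

lemma vge_cden {lam : ℕ → K} {N : ℕ} (hlam : ∀ i, 1 ≤ i → i ≤ N → lam i ≠ 0) :
    ∀ n, n ≤ N → vge (1 - (n : ℤ)) (cden (aLin K lam) n) ∧
      (1 ≤ n → vex (1 - (n : ℤ)) (cden (aLin K lam) n)) := by
  have key : ∀ n : ℕ,
      (n ≤ N → vge (1 - (n : ℤ)) (cden (aLin K lam) n) ∧
        (1 ≤ n → vex (1 - (n : ℤ)) (cden (aLin K lam) n))) ∧
      (n + 1 ≤ N → vge (1 - ((n : ℤ) + 1)) (cden (aLin K lam) (n + 1)) ∧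
        vex (1 - ((n : ℤ) + 1)) (cden (aLin K lam) (n + 1))) := by
    intro n
    induction n with
    | zero =>
      constructor
      · intro _
        refine ⟨fun e he => ?_, fun h => absurd h (by omega)⟩
        show (0 : LaurentSeries K).coeff e = 0
        rfl
      · intro _
        have : vex 0 (cden (aLin K lam) 1) := vex_one
        norm_num
        exact ⟨this.vge, this⟩
    | succ n ih =>
      refine ⟨fun h => ⟨(ih.2 (by omega)).1, fun _ => (ih.2 (by omega)).2⟩, fun h2 => ?_⟩
      show _ ∧ vex _ (aLin K lam (n + 2) * cden (aLin K lam) (n + 1) + cden (aLin K lam) n)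
      have ha : vex (-1) (aLin K lam (n + 2)) := vex_aLin (hlam (n + 2) (by omega) (by omega))
      have h1 := (ih.2 (by omega)).2
      have h0 := ((ih.1 (by omega)).1)
      have hm := vex_mul ha h1
      have he : (-1 : ℤ) + (1 - ((n : ℤ) + 1)) = -((n : ℤ) + 1) := by ring
      rw [he] at hm
      have hres := vex_add_vge hm h0 (by push_cast; omega)
      have he2 : -((n : ℤ) + 1) = 1 - ((n : ℤ) + 1 + 1) := by ring
      rw [he2] at hres
      have hcast : (1 - (((n + 1 : ℕ) : ℤ) + 1)) = 1 - ((n : ℤ) + 1 + 1) := by push_cast; ring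
      rw [hcast]
      exact ⟨hres.vge, hres⟩
  exact fun n hn => (key n).1 hn


lemma vex_neg {n : ℤ} {x : LaurentSeries K} (hx : vex n x) : vex n (-x) :=
  ⟨neg_ne_zero.mpr hx.1, by rw [HahnSeries.order_neg]; exact hx.2⟩

/-- The "domain" `|γ| ≥ |T|`. -/
def Dom (γ : LaurentSeries K) : Prop := γ ≠ 0 ∧ γ.order ≤ -1

/-- Fixed point engine: a map `Φ` sending the domain into series of exact order `B ≤ -1`,
and which is an (ultrametric) contraction, has a unique fixed point in the domain. -/
theorem engine (Φ : LaurentSeries K → LaurentSeries K) (B : ℤ) (hB : B ≤ -1)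
    (hΦ : ∀ γ, Dom γ → vex B (Φ γ))
    (hcontr : ∀ γ γ', Dom γ → Dom γ' → ∀ n, vge n (γ - γ') → vge (n + 1) (Φ γ - Φ γ')) :
    ∃! γ : LaurentSeries K, Dom γ ∧ Φ γ = γ := by
  have domB : ∀ γ : LaurentSeries K, vex B γ → Dom γ := fun γ h => ⟨h.1, le_trans (le_of_eq h.2) hB⟩
  -- the iteration sequence
  set g : ℕ → LaurentSeries K := fun n => Φ^[n] (HahnSeries.single (-1 : ℤ) 1) with hg
  have hg0 : Dom (g 0) := by
    refine ⟨HahnSeries.single_ne_zero one_ne_zero, ?_⟩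
    rw [hg]
    simp only [Function.iterate_zero, id_eq]
    rw [HahnSeries.order_single one_ne_zero]
  have hgsucc : ∀ n, g (n + 1) = Φ (g n) := fun n => by
    rw [hg]; simp only [Function.iterate_succ_apply']
  have hgD : ∀ n, Dom (g n) := by
    intro n
    cases n with
    | zero => exact hg0
    | succ m => rw [hgsucc]; exact domB _ (hΦ _ (by induction m with
        | zero => exact hg0
        | succ i ih => rw [hgsucc]; exact domB _ (hΦ _ ih)))
  have hgB : ∀ n, vge B (g n) := by
    intro n
    cases n with
    | zero =>
      apply vge_of_order_le
      have : (g 0).order = -1 := by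
        rw [hg]; simp only [Function.iterate_zero, id_eq]
        rw [HahnSeries.order_single one_ne_zero]
      omega
    | succ m => rw [hgsucc]; exact (hΦ _ (hgD m)).vge
  have hdiff : ∀ n : ℕ, vge (B + n) (g (n + 1) - g n) := by
    intro n
    induction n with
    | zero => simpa using vge_sub (hgB 1) (hgB 0)
    | succ m ih =>
      have := hcontr _ _ (hgD (m + 1)) (hgD m) (B + m) ih
      rw [← hgsucc (m + 1), ← hgsucc m] at this
      have he : (B + (m : ℤ)) + 1 = B + ((m : ℕ) + 1 : ℕ) := by push_cast; ring
      rw [he] at this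
      exact this
  -- the limit's coefficients
  set N : ℤ → ℕ := fun e => (e - B).toNat + 1 with hN
  set c : ℤ → K := fun e => (g (N e)).coeff e with hc
  have hstab : ∀ (e : ℤ) (m : ℕ), N e ≤ m → (g m).coeff e = c e := by
    intro e m hm
    induction m, hm using Nat.le_induction with
    | base => rfl
    | succ m hm ih =>
      have h0 : (g (m + 1) - g m).coeff e = 0 := by
        apply hdiff m e
        have h1 : e - B ≤ ((e - B).toNat : ℤ) := Int.self_le_toNat _
        have h2 : ((N e : ℕ) : ℤ) ≤ (m : ℤ) := by exact_mod_cast hm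
        rw [hN] at h2
        push_cast at h2
        omega
      rw [HahnSeries.coeff_sub, sub_eq_zero] at h0
      rw [h0]
      exact ih
  -- the limit
  have hbdd : BddBelow (Function.support c) := by
    refine ⟨B, fun e he => ?_⟩
    by_contra hlt
    exact he (hgB (N e) e (not_le.mp hlt))
  set γs : LaurentSeries K := ⟨c, (Set.IsWF.isPWO hbdd.wellFoundedOn_lt)⟩ with hγs
  have hγscoeff : ∀ e, γs.coeff e = c e := fun _ => rfl
  -- γs has exact order B
  have hγsB : vex B γs := by
    have hcB : γs.coeff B ≠ 0 := by
      show (g (N B)).coeff B ≠ 0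
      have hNB : N B = 1 := by rw [hN]; simp
      rw [hNB]
      have h1 : vex B (g 1) := by rw [hgsucc]; exact hΦ _ (hg0)
      rw [← h1.2]
      exact HahnSeries.coeff_order_eq_zero.not.mpr h1.1
    have hne : γs ≠ 0 := HahnSeries.ne_zero_of_coeff_ne_zero hcB
    refine ⟨hne, le_antisymm (HahnSeries.order_le_of_coeff_ne_zero hcB) ?_⟩
    apply le_order_of_vge hne
    intro e he
    exact hgB (N e) e he
  have hγsD : Dom γs := domB _ hγsB
  -- approximation
  have happrox : ∀ M : ℤ, ∀ m : ℕ, N M ≤ m → vge M (γs - g m) := by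
    intro M m hm e he
    rw [HahnSeries.coeff_sub, hγscoeff]
    have hNe : N e ≤ m := by
      refine le_trans ?_ hm
      rw [hN]
      simp only [add_le_add_iff_right]
      exact Int.toNat_le_toNat (by omega)
    rw [hstab e m hNe, sub_self]
  -- fixed point
  have hfix : Φ γs = γs := by
    rw [← sub_eq_zero]
    apply vge_of_all
    intro M
    set m : ℕ := N M with hm
    have h1 : vge (M + 1) (Φ γs - Φ (g m)) :=
      hcontr _ _ hγsD (hgD m) M (happrox M m le_rfl)
    have h2 : vge M (Φ (g m) - γs) := by
      have := vge_neg (happrox M (m + 1) (by omega))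
      rwa [neg_sub, hgsucc m] at this
    have h3 := vge_add (vge_mono (by omega : M ≤ M + 1) h1) h2
    rwa [sub_add_sub_cancel] at h3
  refine ⟨γs, ⟨hγsD, hfix⟩, ?_⟩
  -- uniqueness
  rintro γ ⟨hγD, hγfix⟩
  rw [← sub_eq_zero]
  apply vge_of_all
  intro M
  set n0 : ℤ := min γ.order γs.order with hn0
  have hbase : vge n0 (γ - γs) :=
    vge_sub (vge_of_order_le (min_le_left _ _)) (vge_of_order_le (min_le_right _ _))
  have hstep : ∀ n : ℤ, vge n (γ - γs) → vge (n + 1) (γ - γs) := by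
    intro n hv
    have := hcontr γ γs hγD hγsD n hv
    rwa [hγfix, hfix] at this
  have hiter : ∀ j : ℕ, vge (n0 + j) (γ - γs) := by
    intro j
    induction j with
    | zero => simpa using hbase
    | succ i ih =>
      have := hstep (n0 + i) ih
      have he : n0 + (i : ℤ) + 1 = n0 + ((i : ℕ) + 1 : ℕ) := by push_cast; ring
      rwa [he] at this
  have : n0 + ((M - n0).toNat : ℤ) ≥ M := by
    have := Int.self_le_toNat (M - n0)
    omega
  exact vge_mono this (hiter (M - n0).toNat)

lemma vex_of_eq {n m : ℤ} {x : LaurentSeries K} (h : vex n x) (e : n = m) : vex m x := e ▸ h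

/-- Möbius transform by the continuant matrix. -/
def mo (Xl XL Yl YL γ : LaurentSeries K) : LaurentSeries K := (Xl * γ + XL) / (Yl * γ + YL)

/-- The fixed-point map whose fixed points are the roots of the equation. -/
def Phi (Xl XL Yl YL Pp Qq : LaurentSeries K) (r : ℕ) (γ : LaurentSeries K) : LaurentSeries K :=
  ((mo Xl XL Yl YL γ) ^ r - Qq) / Pp

section PhiSpec
set_option linter.unusedSectionVars false

variable {L k r : ℕ} {Xl XL Yl YL Pp Qq : LaurentSeries K}
variable (hXl : vex (-((L : ℤ) + 1)) Xl) (hXL : vex (-(L : ℤ)) XL)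
  (hYl : vex (-(L : ℤ)) Yl) (hYL : vge (1 - (L : ℤ)) YL)
  (hPp : vex (-2 * (k : ℤ)) Pp) (hQq : vge (1 - 2 * (k : ℤ)) Qq)
  (hr : 2 * k + 1 ≤ r)

include hYl hYL

lemma den_vex : ∀ γ : LaurentSeries K, Dom γ → vex (-(L : ℤ) + γ.order) (Yl * γ + YL) := by
  intro γ hγ
  have h1 : vex (-(L : ℤ) + γ.order) (Yl * γ) := vex_mul hYl ⟨hγ.1, rfl⟩
  exact vex_add_vge h1 hYL (by have := hγ.2; omega)

include hXl hXL

lemma num_vex : ∀ γ : LaurentSeries K, Dom γ → vex (-((L : ℤ) + 1) + γ.order) (Xl * γ + XL) := by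
  intro γ hγ
  have h1 : vex (-((L : ℤ) + 1) + γ.order) (Xl * γ) := vex_mul hXl ⟨hγ.1, rfl⟩
  exact vex_add_vge h1 hXL.vge (by have := hγ.2; omega)

lemma mo_vex : ∀ γ : LaurentSeries K, Dom γ → vex (-1) (mo Xl XL Yl YL γ) := by
  intro γ hγ
  exact vex_of_eq (vex_div (num_vex hXl hXL hYl hYL γ hγ) (den_vex hYl hYL γ hγ)) (by ring)

include hPp hQq hr

lemma Phi_vex : ∀ γ : LaurentSeries K, Dom γ → vex (2 * (k : ℤ) - (r : ℤ))
    (Phi Xl XL Yl YL Pp Qq r γ) := by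
  intro γ hγ
  have hrz : 2 * (k : ℤ) + 1 ≤ (r : ℤ) := by exact_mod_cast hr
  have hmp : vex (-(r : ℤ)) ((mo Xl XL Yl YL γ) ^ r) :=
    vex_of_eq (vex_pow (mo_vex hXl hXL hYl hYL γ hγ) r) (by ring)
  have hnum : vex (-(r : ℤ)) ((mo Xl XL Yl YL γ) ^ r - Qq) :=
    vex_sub_vge hmp hQq (by omega)
  rw [Phi]
  exact vex_of_eq (vex_div hnum hPp) (by ring)

lemma Phi_contr (hdet : Xl * YL - XL * Yl = (-1) ^ (L + 1))
    (hfrob : ∀ a b : LaurentSeries K, (a - b) ^ r = a ^ r - b ^ r) :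
    ∀ γ γ' : LaurentSeries K, Dom γ → Dom γ' → ∀ n : ℤ, vge n (γ - γ') →
      vge (n + 1) (Phi Xl XL Yl YL Pp Qq r γ - Phi Xl XL Yl YL Pp Qq r γ') := by
  intro γ γ' hγ hγ' n hv
  by_cases hee : γ = γ'
  · rw [hee, sub_self]; exact vge_zero _
  have hδ : γ - γ' ≠ 0 := sub_ne_zero.mpr hee
  have hδvex : vex ((γ - γ').order) (γ - γ') := ⟨hδ, rfl⟩
  have hoδ : n ≤ (γ - γ').order := le_order_of_vge hδ hv
  have hmin : min γ.order γ'.order ≤ (γ - γ').order :=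
    le_order_of_vge hδ (vge_sub (vge_of_order_le (min_le_left _ _))
      (vge_of_order_le (min_le_right _ _)))
  have hdγ := den_vex hYl hYL γ hγ
  have hdγ' := den_vex hYl hYL γ' hγ'
  have hdet0 : vex 0 (Xl * YL - XL * Yl) := by
    rw [hdet]
    exact vex_of_eq (vex_pow (vex_neg vex_one) (L + 1)) (by simp)
  have hmodiff : mo Xl XL Yl YL γ - mo Xl XL Yl YL γ' =
      ((Xl * YL - XL * Yl) * (γ - γ')) / ((Yl * γ + YL) * (Yl * γ' + YL)) := by
    unfold mo
    rw [div_sub_div _ _ hdγ.1 hdγ'.1]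
    congr 1
    ring
  have hmodvex : vex ((γ - γ').order + 2 * (L : ℤ) - γ.order - γ'.order)
      (mo Xl XL Yl YL γ - mo Xl XL Yl YL γ') := by
    rw [hmodiff]
    exact vex_of_eq (vex_div (vex_mul hdet0 hδvex) (vex_mul hdγ hdγ')) (by ring)
  have hPhidiff : Phi Xl XL Yl YL Pp Qq r γ - Phi Xl XL Yl YL Pp Qq r γ' =
      (mo Xl XL Yl YL γ - mo Xl XL Yl YL γ') ^ r / Pp := by
    unfold Phi
    rw [div_sub_div_same]
    congr 1
    rw [hfrob]
    ring
  have hfin : vex ((r : ℤ) * ((γ - γ').order + 2 * (L : ℤ) - γ.order - γ'.order) + 2 * (k : ℤ))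
      (Phi Xl XL Yl YL Pp Qq r γ - Phi Xl XL Yl YL Pp Qq r γ') := by
    rw [hPhidiff]
    exact vex_of_eq (vex_div (vex_pow hmodvex r) hPp) (by ring)
  apply vge_mono _ hfin.vge
  -- arithmetic
  have hrz : 2 * (k : ℤ) + 1 ≤ (r : ℤ) := by exact_mod_cast hr
  have hγo : γ.order ≤ -1 := hγ.2
  have hγo' : γ'.order ≤ -1 := hγ'.2
  set oδ : ℤ := (γ - γ').order with hodel
  set w : ℤ := oδ - γ.order - γ'.order with hw
  have hw1 : 1 ≤ w := by rw [hw]; omega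
  have hw2 : w ≤ (r : ℤ) * w := le_mul_of_one_le_left (by omega) (by omega)
  have h2L : (0 : ℤ) ≤ (r : ℤ) * (2 * (L : ℤ)) := by positivity
  have hexp : (r : ℤ) * (oδ + 2 * (L : ℤ) - γ.order - γ'.order) =
      (r : ℤ) * w + (r : ℤ) * (2 * (L : ℤ)) := by rw [hw]; ring
  have hoδw : oδ ≤ w - 2 := by rw [hw]; omega
  have hk0 : (0 : ℤ) ≤ 2 * (k : ℤ) := by positivity
  linarith

end PhiSpec

end P7

open P7 in
/-- Proposition A: the algebraic equation
`y_l X^(r+1) - x_l X^r + (ε₁ P_k y_{l-1} - ε₂ Q_k y_l) X - ε₁ P_k x_{l-1} + ε₂ Q_k x_l = 0`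
has exactly one root `α` in `F(q) = F_q((T⁻¹))` with `|α| ≥ |T|`
(i.e. `α ≠ 0` and `ord(α) ≤ -1`). -/
theorem statement7 (p s t : ℕ) (hp : p.Prime) (hodd : p ≠ 2) (hs : 1 ≤ s) (ht : 1 ≤ t)
    (Fq : Type*) [Field Fq] [Fintype Fq] (hq : Fintype.card Fq = p ^ s)
    (k : ℕ) (hk : memE p t k) (l : ℕ) (hl : 1 ≤ l)
    (lam : ℕ → Fq) (hlam : ∀ n, 1 ≤ n → n ≤ l → lam n ≠ 0)
    (e1 e2 : Fq) (he1 : e1 ≠ 0) (he2 : e2 ≠ 0) :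
    ∃! α : LaurentSeries Fq,
      (α ≠ 0 ∧ α.order ≤ -1) ∧ CFtypeEqn Fq (p ^ t) k l lam e1 e2 α := by
  classical
  -- basic arithmetic: 2k + 1 ≤ p^t
  have hp3 : 3 ≤ p := by
    have := hp.two_le
    omega
  have hr : 2 * k + 1 ≤ p ^ t := by
    obtain ⟨m, lE, hm1, hm2, hlE, hkeq⟩ := hk
    have hop : Odd (p ^ lE) := (hp.odd_of_ne_two hodd).pow
    obtain ⟨c, hc⟩ := hop
    have hdiv : (p ^ lE - 1) / 2 = c := by omega
    have h2m : 2 * m + 1 ≤ p := by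
      have : (p - 1) / 2 * 2 ≤ p - 1 := Nat.div_mul_le_self _ _
      omega
    have hkey2 : 2 * k + 1 = (2 * m + 1) * p ^ lE := by
      rw [hkeq, hdiv, hc]; ring
    have hle : (2 * m + 1) * p ^ lE ≤ p * p ^ lE := Nat.mul_le_mul_right _ h2m
    have hpow : p * p ^ lE ≤ p ^ t := by
      have h1 : p ^ (lE + 1) ≤ p ^ t := Nat.pow_le_pow_right (by omega) (by omega)
      calc p * p ^ lE = p ^ (lE + 1) := by ring
        _ ≤ p ^ t := h1
    omega
  set r : ℕ := p ^ t with hrdef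
  have hrz : 2 * (k : ℤ) + 1 ≤ (r : ℤ) := by exact_mod_cast hr
  -- characteristic p and Frobenius
  haveI hfp : Fact p.Prime := ⟨hp⟩
  have hchar : CharP Fq p := by
    obtain ⟨p', hp'⟩ := CharP.exists Fq
    haveI := hp'
    obtain ⟨n, hp'prime, hcard⟩ := FiniteField.card Fq p'
    have heq : p ^ s = p' ^ (n : ℕ) := by rw [← hq, hcard]
    have hdvd : p ∣ p' := hp.dvd_of_dvd_pow (heq ▸ dvd_pow_self p (by omega))
    have hpp : p = p' := (Nat.prime_dvd_prime_iff_eq hp hp'prime).mp hdvd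
    rwa [hpp]
  haveI := hchar
  haveI : CharP (LaurentSeries Fq) p :=
    charP_of_injective_ringHom (f := HahnSeries.C) HahnSeries.C_injective p
  have hfrob : ∀ a b : LaurentSeries Fq, (a - b) ^ r = a ^ r - b ^ r := by
    intro a b
    rw [hrdef]
    exact sub_pow_char_pow _ _ _
  -- the continuants and their orders
  obtain ⟨L, rfl⟩ : ∃ L, l = L + 1 := ⟨l - 1, by omega⟩
  set Xl := cnum (aLin Fq lam) (L + 1) with hXldef
  set XL := cnum (aLin Fq lam) L with hXLdef
  set Yl := cden (aLin Fq lam) (L + 1) with hYldef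
  set YL := cden (aLin Fq lam) L with hYLdef
  set Pp := algebraMap Fq (LaurentSeries Fq) e1 * PkLS Fq k with hPpdef
  set Qq := algebraMap Fq (LaurentSeries Fq) e2 * QkLS Fq k with hQqdef
  have hXlv : vex (-((L : ℤ) + 1)) Xl :=
    vex_of_eq (vex_cnum hlam (L + 1) le_rfl) (by push_cast; ring)
  have hXLv : vex (-(L : ℤ)) XL := vex_cnum hlam L (by omega)
  have hYlv : vex (-(L : ℤ)) Yl :=
    vex_of_eq ((vge_cden hlam (L + 1) le_rfl).2 (by omega)) (by push_cast; ring)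
  have hYLv : vge (1 - (L : ℤ)) YL := (vge_cden hlam L (by omega)).1
  have hPpv : vex (-2 * (k : ℤ)) Pp := by
    have h1 : vex 0 (algebraMap Fq (LaurentSeries Fq) e1) := by
      rw [algebraMap_eq_C]; exact vex_C he1
    exact vex_of_eq (vex_mul h1 (vex_PkLS k)) (zero_add _)
  have hQqv : vge (1 - 2 * (k : ℤ)) Qq := by
    have h1 : vge 0 (algebraMap Fq (LaurentSeries Fq) e2) := by
      rw [algebraMap_eq_C]; exact vge_C e2
    have h2 := vge_mul h1 (vge_QkLS k)
    rwa [zero_add] at h2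
  have hdet : Xl * YL - XL * Yl = (-1) ^ (L + 1) := cont_det (aLin Fq lam) L
  -- the fixed point
  obtain ⟨γs, ⟨hγsD, hγsfix⟩, huniq⟩ :=
    engine (Phi Xl XL Yl YL Pp Qq r) (2 * (k : ℤ) - r) (by omega)
      (Phi_vex hXlv hXLv hYlv hYLv hPpv hQqv hr)
      (Phi_contr hXlv hXLv hYlv hYLv hPpv hQqv hr hdet hfrob)
  have hden' := den_vex hYlv hYLv
  set αs := mo Xl XL Yl YL γs with hαsdef
  have hαsvex : vex (-1) αs := mo_vex hXlv hXLv hYlv hYLv γs hγsD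
  -- the equation, factored
  have hkey : ∀ α : LaurentSeries Fq, CFtypeEqn Fq r k (L + 1) lam e1 e2 α ↔
      (α ^ r - Qq) * (Yl * α - Xl) + Pp * (YL * α - XL) = 0 := by
    intro α
    rw [CFtypeEqn]
    simp only [Nat.add_sub_cancel]
    rw [← hXldef, ← hXLdef, ← hYldef, ← hYLdef, ← hPpdef, ← hQqdef]
    constructor <;> intro h <;> linear_combination h
  -- αs is a root
  have hroot : CFtypeEqn Fq r k (L + 1) lam e1 e2 αs := by
    rw [hkey]
    have hsub : αs ^ r - Qq = Pp * γs := by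
      have h1 : Phi Xl XL Yl YL Pp Qq r γs = γs := hγsfix
      rw [Phi, ← hαsdef, div_eq_iff hPpv.1] at h1
      linear_combination h1
    rw [hsub]
    have hdγs : Yl * γs + YL ≠ 0 := (hden' γs hγsD).1
    have hdγs' : γs * Yl + YL ≠ 0 := by rwa [mul_comm]
    rw [hαsdef, mo]
    field_simp
    ring
  refine ⟨αs, ⟨⟨hαsvex.1, le_of_eq hαsvex.2⟩, hroot⟩, ?_⟩
  -- uniqueness
  rintro α ⟨⟨hα0, hαord⟩, hCF⟩
  have h := (hkey α).mp hCF
  set γα := (α ^ r - Qq) / Pp with hγαdef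
  have hαvex : vex α.order α := ⟨hα0, rfl⟩
  have hαr : vex ((r : ℤ) * α.order) (α ^ r) := vex_pow hαvex r
  have hro : (r : ℤ) * α.order ≤ -(r : ℤ) := by
    have h2 := mul_le_mul_of_nonneg_left hαord (show (0 : ℤ) ≤ (r : ℤ) by positivity)
    rwa [mul_neg_one] at h2
  have hγαvex : vex ((r : ℤ) * α.order + 2 * (k : ℤ)) γα := by
    rw [hγαdef]
    exact vex_of_eq (vex_div (vex_sub_vge hαr hQqv (by linarith [hro, hrz])) hPpv) (by ring)
  have hγαD : Dom γα := ⟨hγαvex.1, by rw [hγαvex.2]; linarith [hro, hrz]⟩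
  have hPγα : Pp * γα = α ^ r - Qq := by
    rw [hγαdef, mul_comm, div_mul_cancel₀ _ hPpv.1]
  have hdγα : Yl * γα + YL ≠ 0 := (hden' γα hγαD).1
  have hmoγα : mo Xl XL Yl YL γα = α := by
    rw [mo, div_eq_iff hdγα]
    have h2 : Pp * (Xl * γα + XL) = Pp * (α * (Yl * γα + YL)) := by
      linear_combination (Xl - α * Yl) * hPγα - h
    exact mul_left_cancel₀ hPpv.1 h2
  have hΦγα : Phi Xl XL Yl YL Pp Qq r γα = γα := by
    rw [Phi, hmoγα]
  have hγeq : γα = γs := huniq γα ⟨hγαD, hΦγα⟩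
  rw [← hmoγα, hγeq]
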